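/- arXiv:1603.01392 — 3 statements merged into one kernel-verified Lean document; each statement's English description precedes it below -/
import Mathlib

section
/- Let 0 < p < 1 and p < c < min{2p, 1}, and define w(p,c) = ((1−c)/(1−p))·((2p−c)(1−p)/(2p(c−p)) + 1/(2c)) (the mean waiting time in the region where the residual-queue term E(p,c) is positive, i.e. p < c < 2p). Then the second partial derivative of w with respect to p equals (1−c)·(1/(c−p)³ − 1/p³ + 1/(c(1−p)³)), and this quantity is strictly positive. -/
/-- In the region `p < c < min{2p, 1}` (where the residual-queue term is
positive), the second partial derivative of the mean waiting time
`w(p,c) = ((1-c)/(1-p)) * ((2p-c)(1-p)/(2p(c-p)) + 1/(2c))` with respect to `p`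
equals `(1-c)*(1/(c-p)^3 - 1/p^3 + 1/(c*(1-p)^3))`, which is strictly positive. -/
theorem stmt_3 (p c : ℝ) (hp0 : 0 < p) (hp1 : p < 1) (hc0 : p < c)
    (hc1 : c < min (2 * p) 1) :
    deriv (fun p' : ℝ => deriv (fun p'' : ℝ =>
        ((1 - c) / (1 - p'')) * ((2 * p'' - c) * (1 - p'') / (2 * p'' * (c - p''))
          + 1 / (2 * c))) p') p
      = (1 - c) * (1 / (c - p) ^ 3 - 1 / p ^ 3 + 1 / (c * (1 - p) ^ 3)) ∧
    0 < (1 - c) * (1 / (c - p) ^ 3 - 1 / p ^ 3 + 1 / (c * (1 - p) ^ 3)) := by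
  obtain ⟨hc2p, hc1'⟩ := lt_min_iff.mp hc1
  have hcpos : 0 < c := hp0.trans hc0
  have hcne : c ≠ 0 := ne_of_gt hcpos
  set f : ℝ → ℝ := fun p'' => ((1 - c) / (1 - p'')) *
      ((2 * p'' - c) * (1 - p'') / (2 * p'' * (c - p'')) + 1 / (2 * c)) with hf
  set g : ℝ → ℝ := fun x => (1 - c) / 2 * ((c - x)⁻¹ - x⁻¹)
      + (1 - c) / (2 * c) * (1 - x)⁻¹ with hgdef
  set g1 : ℝ → ℝ := fun x => (1 - c) / 2 * (((c - x) ^ 2)⁻¹ + (x ^ 2)⁻¹)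
      + (1 - c) / (2 * c) * ((1 - x) ^ 2)⁻¹ with hg1def
  have hnhds : Set.Ioo (0:ℝ) c ∈ nhds p := isOpen_Ioo.mem_nhds ⟨hp0, hc0⟩
  have hne : ∀ x ∈ Set.Ioo (0:ℝ) c, x ≠ 0 ∧ c - x ≠ 0 ∧ (1:ℝ) - x ≠ 0 := by
    intro x hx
    exact ⟨ne_of_gt hx.1, sub_ne_zero.mpr (ne_of_gt hx.2),
      sub_ne_zero.mpr (ne_of_gt (hx.2.trans hc1'))⟩
  have hfg : f =ᶠ[nhds p] g := by
    refine Filter.eventuallyEq_of_mem hnhds (fun x hx => ?_)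
    obtain ⟨hx0, hxc, hx1⟩ := hne x hx
    simp only [hf, hgdef]
    field_simp
    ring
  have hgd : ∀ x ∈ Set.Ioo (0:ℝ) c, HasDerivAt g (g1 x) x := by
    intro x hx
    obtain ⟨hx0, hxc, hx1⟩ := hne x hx
    have h1 : HasDerivAt (fun y : ℝ => (c - y)⁻¹) (((c - x) ^ 2)⁻¹) x := by
      have := (((hasDerivAt_const x c).sub (hasDerivAt_id x)).inv hxc)
      refine this.congr_deriv ?_
      simp only [Pi.sub_apply, id_eq]
      field_simp
      ring
    have h2 : HasDerivAt (fun y : ℝ => y⁻¹) (-(x ^ 2)⁻¹) x := hasDerivAt_inv hx0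
    have h3 : HasDerivAt (fun y : ℝ => (1 - y)⁻¹) (((1 - x) ^ 2)⁻¹) x := by
      have := (((hasDerivAt_const x (1:ℝ)).sub (hasDerivAt_id x)).inv hx1)
      refine this.congr_deriv ?_
      simp only [Pi.sub_apply, id_eq]
      field_simp
      ring
    have := ((h1.sub h2).const_mul ((1 - c) / 2)).add (h3.const_mul ((1 - c) / (2 * c)))
    refine this.congr_deriv ?_
    simp only [hg1def]
    ring
  have hderiv : deriv f =ᶠ[nhds p] g1 :=
    (hfg.deriv).trans (Filter.eventuallyEq_of_mem hnhds fun x hx => (hgd x hx).deriv)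
  have hcp : 0 < c - p := by linarith
  have hp1' : (0:ℝ) < 1 - p := by linarith
  have hmain : HasDerivAt g1 ((1 - c) * (1 / (c - p) ^ 3 - 1 / p ^ 3
      + 1 / (c * (1 - p) ^ 3))) p := by
    have hcpne : c - p ≠ 0 := ne_of_gt hcp
    have hp1ne : (1:ℝ) - p ≠ 0 := ne_of_gt hp1'
    have hpne : p ≠ 0 := ne_of_gt hp0
    have h1 : HasDerivAt (fun y : ℝ => ((c - y) ^ 2)⁻¹) (2 / (c - p) ^ 3) p := by
      have hb : HasDerivAt (fun y : ℝ => (c - y) ^ 2)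
          (2 * (c - p) ^ 1 * (0 - 1)) p :=
        ((hasDerivAt_const p c).sub (hasDerivAt_id p)).pow 2
      have := hb.inv (pow_ne_zero 2 hcpne)
      refine this.congr_deriv ?_
      field_simp
      ring
    have h2 : HasDerivAt (fun y : ℝ => (y ^ 2)⁻¹) (-(2 / p ^ 3)) p := by
      have hb : HasDerivAt (fun y : ℝ => y ^ 2) (2 * p ^ 1 * 1) p :=
        (hasDerivAt_id p).pow 2
      have := hb.inv (pow_ne_zero 2 hpne)
      refine this.congr_deriv ?_
      field_simp
    have h3 : HasDerivAt (fun y : ℝ => ((1 - y) ^ 2)⁻¹) (2 / (1 - p) ^ 3) p := by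
      have hb : HasDerivAt (fun y : ℝ => (1 - y) ^ 2)
          (2 * (1 - p) ^ 1 * (0 - 1)) p :=
        ((hasDerivAt_const p (1:ℝ)).sub (hasDerivAt_id p)).pow 2
      have := hb.inv (pow_ne_zero 2 hp1ne)
      refine this.congr_deriv ?_
      field_simp
      ring
    have := ((h1.add h2).const_mul ((1 - c) / 2)).add (h3.const_mul ((1 - c) / (2 * c)))
    refine this.congr_deriv ?_
    field_simp
    ring
  have hpos : 0 < (1 - c) * (1 / (c - p) ^ 3 - 1 / p ^ 3 + 1 / (c * (1 - p) ^ 3)) := by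
    have h1c : (0:ℝ) < 1 - c := by linarith
    have hlt : (c - p) ^ 3 < p ^ 3 := by
      apply pow_lt_pow_left₀ (by linarith) (le_of_lt hcp)
      norm_num
    have h13 : 1 / p ^ 3 < 1 / (c - p) ^ 3 :=
      one_div_lt_one_div_of_lt (by positivity) hlt
    have h3 : 0 < 1 / (c * (1 - p) ^ 3) := by positivity
    exact mul_pos h1c (by linarith)
  refine ⟨?_, hpos⟩
  have : deriv (fun p' : ℝ => deriv f p') p = deriv g1 p :=
    Filter.EventuallyEq.deriv_eq hderiv
  rw [this, hmain.deriv]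
end

section
/- Fix p with 0 < p < 1. The function c ↦ ((1−c)/(1−p))·((2p−c)(1−p)/(2p(c−p)) + 1/(2c)) is convex on the open interval (p, min{2p, 1}). -/
/-- For fixed `0 < p < 1`, the mean waiting time
`c ↦ ((1-c)/(1-p)) * ((2p-c)(1-p)/(2p(c-p)) + 1/(2c))` (valid in the region
`p < c < 2p`, where the residual-queue term is positive) is convex on the open
interval `(p, min {2p, 1})`. -/
theorem stmt_8 (p : ℝ) (hp0 : 0 < p) (hp1 : p < 1) :
    ConvexOn ℝ (Set.Ioo p (min (2 * p) 1))
      (fun c : ℝ => ((1 - c) / (1 - p)) *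
        ((2 * p - c) * (1 - p) / (2 * p * (c - p)) + 1 / (2 * c))) := by
  have hcx : Convex ℝ (Set.Ioo p (min (2 * p) 1)) := convex_Ioo _ _
  -- convexity of c ↦ (c - p)⁻¹ on the interval
  have h1 : ConvexOn ℝ (Set.Ioo p (min (2 * p) 1)) (fun c : ℝ => (c - p)⁻¹) := by
    have := (convexOn_zpow (𝕜 := ℝ) (-1)).translate_right (-p)
    refine (this.subset ?_ hcx).congr ?_
    · intro c hc
      simp only [Set.mem_preimage, Set.mem_Ioi]
      linarith [hc.1]
    · intro c _
      simp [zpow_neg, sub_eq_neg_add]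
  -- convexity of c ↦ c⁻¹ on the interval
  have h2 : ConvexOn ℝ (Set.Ioo p (min (2 * p) 1)) (fun c : ℝ => c⁻¹) := by
    have := convexOn_zpow (𝕜 := ℝ) (-1)
    refine (this.subset ?_ hcx).congr ?_
    · intro c hc
      simp only [Set.mem_Ioi]
      linarith [hc.1]
    · intro c _
      simp [zpow_neg]
  have h3 : ConvexOn ℝ (Set.Ioo p (min (2 * p) 1)) (fun c : ℝ => c / (2 * p)) := by
    exact (convexOn_id hcx).smul (c := (2 * p)⁻¹) (by positivity) |>.congr (fun c _ => by
      beta_reduce; rw [smul_eq_mul]; unfold id; ring)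
  have hg : ConvexOn ℝ (Set.Ioo p (min (2 * p) 1))
      (fun c : ℝ => (1 - p) / 2 * (c - p)⁻¹ + 1 / (2 * (1 - p)) * c⁻¹ +
        (c / (2 * p) + (-((p + 1) / (2 * p)) - 1 / (2 * (1 - p))))) := by
    have hs1 := h1.smul (c := (1 - p) / 2) (div_nonneg (by linarith) (by norm_num))
    have hs2 := h2.smul (c := 1 / (2 * (1 - p))) (div_nonneg zero_le_one (by linarith))
    exact (hs1.add hs2).add (h3.add_const _)
  refine hg.congr fun c hc => ?_
  have hcp : p < c := hc.1
  have hc2p : c < 2 * p := lt_of_lt_of_le hc.2 (min_le_left _ _)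
  have hc0 : (0:ℝ) < c := hp0.trans hcp
  have hne1 : c - p ≠ 0 := by linarith
  have hne2 : c ≠ 0 := ne_of_gt hc0
  have hne3 : p ≠ 0 := ne_of_gt hp0
  have hne4 : (1:ℝ) - p ≠ 0 := by linarith
  field_simp
  ring
end

section
/- Fix c with 0 < c < 1. The function p ↦ ((1−c)/(1−p))·((2p−c)(1−p)/(2p(c−p)) + 1/(2c)) is convex on the open interval (c/2, c) (the region where p < c < 2p, i.e. the residual-queue term is positive). -/
/-- For fixed `0 < c < 1`, the mean waiting time
`p ↦ ((1-c)/(1-p)) * ((2p-c)(1-p)/(2p(c-p)) + 1/(2c))` (valid in the region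
`p < c < 2p`, where the residual-queue term is positive) is convex on the open
interval `(c/2, c)`. -/
theorem stmt_9 (c : ℝ) (hc0 : 0 < c) (hc1 : c < 1) :
    ConvexOn ℝ (Set.Ioo (c / 2) c)
      (fun p : ℝ => ((1 - c) / (1 - p)) *
        ((2 * p - c) * (1 - p) / (2 * p * (c - p)) + 1 / (2 * c))) := by
  set s : Set ℝ := Set.Ioo (c / 2) c with hs
  have hopen : IsOpen s := isOpen_Ioo
  have hconvs : Convex ℝ s := convex_Ioo _ _
  have hfacts : ∀ x ∈ s, 0 < x ∧ 0 < c - x ∧ 0 < 1 - x := by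
    rintro x ⟨h1, h2⟩
    exact ⟨lt_trans (by linarith) h1, by linarith, by linarith⟩
  set g : ℝ → ℝ := fun p => (1 - c) / 2 * ((c - p)⁻¹ - p⁻¹)
      + (1 - c) / (2 * c) * (1 - p)⁻¹ with hgdef
  set g1 : ℝ → ℝ := fun p => (1 - c) / 2 * (((c - p) ^ 2)⁻¹ + (p ^ 2)⁻¹)
      + (1 - c) / (2 * c) * (((1 - p) ^ 2)⁻¹) with hg1def
  set g2 : ℝ → ℝ := fun p => (1 - c) / 2 * (2 * ((c - p) ^ 3)⁻¹ - 2 * (p ^ 3)⁻¹)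
      + (1 - c) / (2 * c) * (2 * ((1 - p) ^ 3)⁻¹) with hg2def
  have hd1 : ∀ x ∈ s, HasDerivAt g (g1 x) x := by
    intro x hx
    obtain ⟨hx0, hxc, hx1⟩ := hfacts x hx
    have h1 : HasDerivAt (fun p : ℝ => (c - p)⁻¹) (((c - x) ^ 2)⁻¹) x := by
      have := ((hasDerivAt_const x c).sub (hasDerivAt_id x)).inv (ne_of_gt hxc)
      convert this using 1
      · rfl
      · rfl
      · rfl
      change _ = -(0 - 1) / (c - x) ^ 2
      field_simp
      ring
    have h2 : HasDerivAt (fun p : ℝ => p⁻¹) (-(x ^ 2)⁻¹) x := by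
      have := (hasDerivAt_id x).inv (ne_of_gt hx0)
      convert this using 1
      · rfl
      · rfl
      · rfl
      change _ = -1 / x ^ 2
      field_simp
    have h3 : HasDerivAt (fun p : ℝ => (1 - p)⁻¹) (((1 - x) ^ 2)⁻¹) x := by
      have := ((hasDerivAt_const x (1:ℝ)).sub (hasDerivAt_id x)).inv (ne_of_gt hx1)
      convert this using 1
      · rfl
      · rfl
      · rfl
      change _ = -(0 - 1) / (1 - x) ^ 2
      field_simp
      ring
    have := (((h1.sub h2).const_mul ((1 - c) / 2)).add (h3.const_mul ((1 - c) / (2 * c))))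
    convert this using 1
    · rfl
    · rfl
    · rfl
    simp only [g1]
    ring
  have hd2 : ∀ x ∈ s, HasDerivAt g1 (g2 x) x := by
    intro x hx
    obtain ⟨hx0, hxc, hx1⟩ := hfacts x hx
    have h1 : HasDerivAt (fun p : ℝ => ((c - p) ^ 2)⁻¹) (2 * ((c - x) ^ 3)⁻¹) x := by
      have hb := ((hasDerivAt_const x c).sub (hasDerivAt_id x)).pow 2
      have := hb.inv (by simpa using pow_ne_zero 2 (ne_of_gt hxc))
      convert this using 1
      · rfl
      · rfl
      · rfl
      change _ = -((2:ℕ) * (c - x) ^ (2 - 1) * (0 - 1)) / ((c - x) ^ 2) ^ 2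
      norm_num
      field_simp
    have h2 : HasDerivAt (fun p : ℝ => (x : ℝ)⁻¹) 0 x := hasDerivAt_const x _
    have h2' : HasDerivAt (fun p : ℝ => (p ^ 2)⁻¹) (-(2 * (x ^ 3)⁻¹)) x := by
      have hb := (hasDerivAt_id x).pow 2
      have := hb.inv (by simpa using pow_ne_zero 2 (ne_of_gt hx0))
      convert this using 1
      · rfl
      · rfl
      · rfl
      change _ = -((2:ℕ) * x ^ (2 - 1) * 1) / (x ^ 2) ^ 2
      norm_num
      field_simp
    have h3 : HasDerivAt (fun p : ℝ => ((1 - p) ^ 2)⁻¹) (2 * ((1 - x) ^ 3)⁻¹) x := by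
      have hb := ((hasDerivAt_const x (1:ℝ)).sub (hasDerivAt_id x)).pow 2
      have := hb.inv (by simpa using pow_ne_zero 2 (ne_of_gt hx1))
      convert this using 1
      · rfl
      · rfl
      · rfl
      change _ = -((2:ℕ) * (1 - x) ^ (2 - 1) * (0 - 1)) / ((1 - x) ^ 2) ^ 2
      norm_num
      field_simp
    have := (((h1.add h2').const_mul ((1 - c) / 2)).add (h3.const_mul ((1 - c) / (2 * c))))
    convert this using 1
    · rfl
    · rfl
    · rfl
    simp only [g2]
    ring
  have hderiv_eq : Set.EqOn (deriv g) g1 s := fun x hx => (hd1 x hx).deriv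
  have hdg1 : ∀ x ∈ s, HasDerivAt (deriv g) (g2 x) x := by
    intro x hx
    refine (hd2 x hx).congr_of_eventuallyEq ?_
    filter_upwards [hopen.mem_nhds hx] with y hy
    exact hderiv_eq hy
  have key : ConvexOn ℝ s g := by
    apply convexOn_of_deriv2_nonneg hconvs
    · exact fun x hx => (hd1 x hx).continuousAt.continuousWithinAt
    · rw [hopen.interior_eq]
      exact fun x hx => (hd1 x hx).differentiableAt.differentiableWithinAt
    · rw [hopen.interior_eq]
      exact fun x hx => (hdg1 x hx).differentiableAt.differentiableWithinAt
    · rw [hopen.interior_eq]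
      intro x hx
      have hder2 : deriv^[2] g x = g2 x := by
        simp only [Function.iterate_succ, Function.iterate_zero, Function.comp_apply, id]
        exact (hdg1 x hx).deriv
      rw [hder2]
      obtain ⟨hx0, hxc, hx1⟩ := hfacts x hx
      obtain ⟨hxl, hxr⟩ := hx
      have hle : c - x < x := by linarith
      have h3 : ((x : ℝ) ^ 3)⁻¹ ≤ ((c - x) ^ 3)⁻¹ := by
        apply inv_anti₀ (by positivity)
        exact pow_le_pow_left₀ (le_of_lt hxc) (le_of_lt hle) 3
      have ht1 : 0 ≤ (1 - c) / 2 * (2 * ((c - x) ^ 3)⁻¹ - 2 * (x ^ 3)⁻¹) := by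
        apply mul_nonneg (by linarith)
        linarith
      have ht2 : 0 ≤ (1 - c) / (2 * c) * (2 * ((1 - x) ^ 3)⁻¹) :=
        mul_nonneg (div_nonneg (by linarith) (by positivity)) (by positivity)
      simp only [hg2def]
      linarith
  refine key.congr fun p hp => ?_
  obtain ⟨hp0, hpc, hp1⟩ := hfacts p hp
  have h1 : p ≠ 0 := ne_of_gt hp0
  have h2 : c - p ≠ 0 := ne_of_gt hpc
  have h3 : (1 : ℝ) - p ≠ 0 := ne_of_gt hp1
  have h4 : c ≠ 0 := ne_of_gt hc0
  simp only [hgdef]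
  field_simp
  ring
end
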